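/- Let f₁, f₂ ∈ ℂ[X₁,X₂] be polynomials with f₂ ≠ 0 such that every common divisor of f₁ and f₂ is a unit (f₁ and f₂ are relatively prime), and suppose the rational function f₁/f₂ is symmetric, i.e., f₁(X₂,X₁)·f₂(X₁,X₂) = f₁(X₁,X₂)·f₂(X₂,X₁). Then f₁(X₂,X₁) = f₁(X₁,X₂) and f₂(X₂,X₁) = f₂(X₁,X₂), i.e., both f₁ and f₂ are symmetric polynomials. -/

import Mathlib

/- Context: ℂ[X₁,X₂] is the polynomial ring in two variables over ℂ (variables indexed
0 ↦ X₁, 1 ↦ X₂); `g(X₂,X₁)` is obtained by the automorphism swapping the two variables.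
"Relatively prime" means every common divisor is a unit, i.e. `IsRelPrime`. -/

open MvPolynomial

/-- Units of `ℂ[X₁,X₂]` are constants. -/
lemma aux_unit_eq_C {u : MvPolynomial (Fin 2) ℂ} (hu : IsUnit u) :
    ∃ c : ℂ, u = C c := by
  have h1 : IsUnit (MvPolynomial.finSuccEquiv ℂ 1 u) := hu.map _
  obtain ⟨r, hr, hru⟩ := Polynomial.isUnit_iff.mp h1
  have h2 : IsUnit (MvPolynomial.finSuccEquiv ℂ 0 r) := hr.map _
  obtain ⟨r0, _, hr0u⟩ := Polynomial.isUnit_iff.mp h2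
  set c := constantCoeff r0 with hc
  have hr0c : r0 = MvPolynomial.C c := eq_C_of_isEmpty r0
  refine ⟨c, ?_⟩
  have key0 : (MvPolynomial.finSuccEquiv ℂ 0).symm (Polynomial.C (MvPolynomial.C c)) =
      MvPolynomial.C c := by
    have := RingHom.congr_fun (finSuccEquiv_comp_C_eq_C (R := ℂ) 0) c
    simpa using this
  have hrC : r = MvPolynomial.C c := by
    have h3 := congrArg (MvPolynomial.finSuccEquiv ℂ 0).symm hr0u
    rw [AlgEquiv.symm_apply_apply] at h3
    rw [← h3, hr0c, key0]
  have key1 : (MvPolynomial.finSuccEquiv ℂ 1).symm (Polynomial.C (MvPolynomial.C c)) =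
      MvPolynomial.C c := by
    have := RingHom.congr_fun (finSuccEquiv_comp_C_eq_C (R := ℂ) 1) c
    simpa using this
  apply (MvPolynomial.finSuccEquiv ℂ 1).injective
  rw [← hru, hrC, ← key1, AlgEquiv.apply_symm_apply]

/-- An antisymmetric polynomial is divisible by `X₁ - X₂`. -/
lemma aux_antisym_dvd {p : MvPolynomial (Fin 2) ℂ}
    (hp : rename (Equiv.swap (0 : Fin 2) 1) p = -p) :
    (X 0 - X 1 : MvPolynomial (Fin 2) ℂ) ∣ p := by
  have heX : MvPolynomial.finSuccEquiv ℂ 1 (X 0 - X 1)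
      = Polynomial.X - Polynomial.C (X 0) := by
    have h1 : (1 : Fin 2) = Fin.succ 0 := rfl
    rw [map_sub, finSuccEquiv_X_zero, h1, finSuccEquiv_X_succ]
  have key : ∀ q : MvPolynomial (Fin 2) ℂ,
      Polynomial.eval (X 0 : MvPolynomial (Fin 1) ℂ) (MvPolynomial.finSuccEquiv ℂ 1 q)
        = aeval (fun _ : Fin 2 => (X 0 : MvPolynomial (Fin 1) ℂ)) q := by
    intro q
    induction q using MvPolynomial.induction_on with
    | C a => simp [finSuccEquiv_apply]
    | add p q hp hq => simp [map_add, hp, hq]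
    | mul_X p i hp =>
      rw [map_mul, Polynomial.eval_mul, map_mul, hp]
      refine congrArg (HMul.hMul _) ?_
      refine Fin.cases ?_ ?_ i
      · simp [finSuccEquiv_X_zero]
      · intro j
        rw [finSuccEquiv_X_succ]
        simp [Subsingleton.elim j 0]
  have h2' : Polynomial.eval (X 0 : MvPolynomial (Fin 1) ℂ)
      (MvPolynomial.finSuccEquiv ℂ 1 (rename (Equiv.swap (0 : Fin 2) 1) p))
      = Polynomial.eval (X 0 : MvPolynomial (Fin 1) ℂ) (MvPolynomial.finSuccEquiv ℂ 1 p) := by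
    rw [key, key, aeval_rename]
    rfl
  rw [hp, map_neg, Polynomial.eval_neg] at h2'
  have h0 : Polynomial.eval (X 0 : MvPolynomial (Fin 1) ℂ)
      (MvPolynomial.finSuccEquiv ℂ 1 p) = 0 := by
    have hxx : Polynomial.eval (X 0 : MvPolynomial (Fin 1) ℂ)
        (MvPolynomial.finSuccEquiv ℂ 1 p)
        + Polynomial.eval (X 0 : MvPolynomial (Fin 1) ℂ)
        (MvPolynomial.finSuccEquiv ℂ 1 p) = 0 := by
      nth_rewrite 1 [← h2']
      exact neg_add_cancel _
    have h2s : (2 : ℂ) • Polynomial.eval (X 0 : MvPolynomial (Fin 1) ℂ)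
        (MvPolynomial.finSuccEquiv ℂ 1 p) = 0 := by
      rw [two_smul]; exact hxx
    rcases smul_eq_zero.mp h2s with h | h
    · exact absurd h two_ne_zero
    · exact h
  have hdvd : MvPolynomial.finSuccEquiv ℂ 1 (X 0 - X 1) ∣ MvPolynomial.finSuccEquiv ℂ 1 p := by
    rw [heX, Polynomial.dvd_iff_isRoot]
    exact h0
  obtain ⟨q, hq⟩ := hdvd
  refine ⟨(MvPolynomial.finSuccEquiv ℂ 1).symm q, ?_⟩
  apply (MvPolynomial.finSuccEquiv ℂ 1).injective
  rw [map_mul, AlgEquiv.apply_symm_apply, ← hq]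

/-- If `f₁, f₂ ∈ ℂ[X₁,X₂]` are relatively prime, `f₂ ≠ 0`, and the rational function
`f₁/f₂` is symmetric (i.e. `f₁(X₂,X₁)·f₂(X₁,X₂) = f₁(X₁,X₂)·f₂(X₂,X₁)`), then both
`f₁` and `f₂` are symmetric polynomials. -/
theorem statement3 (f1 f2 : MvPolynomial (Fin 2) ℂ) (hf2 : f2 ≠ 0)
    (hcop : IsRelPrime f1 f2)
    (hsymm : rename (Equiv.swap (0 : Fin 2) 1) f1 * f2
      = f1 * rename (Equiv.swap (0 : Fin 2) 1) f2) :
    rename (Equiv.swap (0 : Fin 2) 1) f1 = f1 ∧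
      rename (Equiv.swap (0 : Fin 2) 1) f2 = f2 := by
  set σ : MvPolynomial (Fin 2) ℂ →ₐ[ℂ] MvPolynomial (Fin 2) ℂ :=
    rename (Equiv.swap (0 : Fin 2) 1) with hσ
  have hσσ : ∀ p : MvPolynomial (Fin 2) ℂ, σ (σ p) = p := by
    intro p
    rw [hσ]
    simp only [rename_rename]
    have h : (⇑(Equiv.swap (0 : Fin 2) 1)) ∘ (⇑(Equiv.swap (0 : Fin 2) 1)) = id := by
      funext x; simp
    rw [h, rename_id, AlgHom.id_apply]
  have hσC : ∀ a : ℂ, σ (C a) = C a := fun a => by rw [hσ]; exact rename_C _ a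
  by_cases hf1 : f1 = 0
  · have hu2 : IsUnit f2 := hcop (by rw [hf1]; exact dvd_zero f2) dvd_rfl
    obtain ⟨c, hcval⟩ := aux_unit_eq_C hu2
    constructor
    · rw [hf1]; exact map_zero σ
    · rw [hcval]; exact hσC c
  have hcopσ : IsRelPrime (σ f1) (σ f2) := by
    intro d hd1 hd2
    have h1 : σ d ∣ σ (σ f1) := map_dvd σ hd1
    have h2 : σ d ∣ σ (σ f2) := map_dvd σ hd2
    rw [hσσ] at h1 h2
    have h3 := (hcop h1 h2).map σ
    rwa [hσσ] at h3
  -- f1 and σ f1 are associated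
  have hd1 : f1 ∣ σ f1 := hcop.dvd_of_dvd_mul_right ⟨σ f2, hsymm⟩
  have hd1' : σ f1 ∣ f1 := hcopσ.dvd_of_dvd_mul_right ⟨f2, hsymm.symm⟩
  obtain ⟨u, hu⟩ := associated_of_dvd_dvd hd1 hd1'
  obtain ⟨c, hcval⟩ := aux_unit_eq_C u.isUnit
  have huσ : σ f1 = f1 * C c := by rw [← hu, hcval]
  -- f2 and σ f2 are associated
  have hd2 : f2 ∣ σ f2 :=
    hcop.symm.dvd_of_dvd_mul_right ⟨σ f1, by linear_combination -hsymm⟩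
  have hd2' : σ f2 ∣ f2 :=
    hcopσ.symm.dvd_of_dvd_mul_right ⟨f1, by linear_combination hsymm⟩
  obtain ⟨v, hv⟩ := associated_of_dvd_dvd hd2 hd2'
  obtain ⟨d, hdC⟩ := aux_unit_eq_C v.isUnit
  have hvσ : σ f2 = f2 * C d := by rw [← hv, hdC]
  -- c * c = 1
  have hcc : c * c = 1 := by
    have h1 : f1 * 1 = f1 * (C c * C c) := by
      conv_lhs => rw [mul_one, ← hσσ f1]
      rw [huσ, map_mul, huσ, hσC, mul_assoc]
    have h2 := mul_left_cancel₀ hf1 h1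
    have h3 : C (c * c) = (C 1 : MvPolynomial (Fin 2) ℂ) := by
      rw [map_mul, map_one, ← h2]
    exact C_injective _ _ h3
  -- c = d
  have hcd : c = d := by
    have h' := hsymm
    rw [huσ, hvσ] at h'
    have h : f1 * f2 * C c = f1 * f2 * C d := by linear_combination h'
    exact C_injective _ _ (mul_left_cancel₀ (mul_ne_zero hf1 hf2) h)
  rcases mul_self_eq_one_iff.mp hcc with h1 | h1
  · refine ⟨?_, ?_⟩
    · rw [huσ, h1]; simp
    · rw [hvσ, ← hcd, h1]; simp
  · exfalso
    have ha1 : rename (Equiv.swap (0 : Fin 2) 1) f1 = -f1 := by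
      have h' := huσ
      rw [hσ] at h'
      rw [h', h1]
      simp
    have ha2 : rename (Equiv.swap (0 : Fin 2) 1) f2 = -f2 := by
      have h' := hvσ
      rw [hσ] at h'
      rw [h', ← hcd, h1]
      simp
    have hXu : IsUnit (X 0 - X 1 : MvPolynomial (Fin 2) ℂ) :=
      hcop (aux_antisym_dvd ha1) (aux_antisym_dvd ha2)
    obtain ⟨e, hce⟩ := aux_unit_eq_C hXu
    have h0 := congrArg (eval (fun _ => (0 : ℂ))) hce
    have h1' := congrArg (eval (fun i : Fin 2 => if i = 0 then (1 : ℂ) else 0)) hce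
    simp [eval_X, eval_C] at h0 h1'
    rw [← h0] at h1'
    norm_num at h1'
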